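/- Let d_x, d_p ≥ 1 be integers and C₀ > 0. Let g : ℝ^{d_x} × ℝ^{d_p} → [0,∞) be measurable with g(x,p) ≤ C₀ for almost every (x,p). Let M, S be real numbers with M ≥ S > -d_p. Then there is a constant C > 0, depending only on C₀, S, M and d_p, such that ‖p_0^S g‖_{L^{(M+d_p)/(S+d_p)}_x L^1_p} ≤ C ‖p_0^M g‖_{L^1_x L^1_p}^{(S+d_p)/(M+d_p)}. -/

import Mathlib

open MeasureTheory

section Aux

variable {dp : ℕ}

private lemma p0_one_le (p : EuclideanSpace ℝ (Fin dp)) : 1 ≤ Real.sqrt (1 + ‖p‖ ^ 2) :=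
  Real.one_le_sqrt.mpr (by nlinarith [sq_nonneg ‖p‖])

private lemma p0_pos (p : EuclideanSpace ℝ (Fin dp)) : 0 < Real.sqrt (1 + ‖p‖ ^ 2) :=
  lt_of_lt_of_le one_pos (p0_one_le p)

private lemma norm_le_p0 (p : EuclideanSpace ℝ (Fin dp)) : ‖p‖ ≤ Real.sqrt (1 + ‖p‖ ^ 2) := by
  calc ‖p‖ = Real.sqrt (‖p‖ ^ 2) := (Real.sqrt_sq (norm_nonneg p)).symm
    _ ≤ Real.sqrt (1 + ‖p‖ ^ 2) := Real.sqrt_le_sqrt (by nlinarith)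

private lemma p0_continuous :
    Continuous (fun p : EuclideanSpace ℝ (Fin dp) => Real.sqrt (1 + ‖p‖ ^ 2)) :=
  Real.continuous_sqrt.comp (continuous_const.add (continuous_norm.pow 2))

private lemma p0_rpow_measurable (S : ℝ) :
    Measurable (fun p : EuclideanSpace ℝ (Fin dp) => Real.sqrt (1 + ‖p‖ ^ 2) ^ S) := by
  have h := (p0_continuous (dp := dp)).measurable
  fun_prop

/-- Key ball estimate: `∫_{p₀ ≤ R} p₀^S dp ≤ K R^{S+dp}` for `R ≥ 1`. -/
private lemma ball_bound (hdp : 1 ≤ dp) (S : ℝ) (hS : -(dp : ℝ) < S) :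
    ∃ K : ℝ, 0 < K ∧ ∀ R : ℝ, 1 ≤ R →
      ∫⁻ p in {p : EuclideanSpace ℝ (Fin dp) | Real.sqrt (1 + ‖p‖ ^ 2) ≤ R},
        ENNReal.ofReal (Real.sqrt (1 + ‖p‖ ^ 2) ^ S)
      ≤ ENNReal.ofReal (K * R ^ (S + (dp : ℝ))) := by
  have hSd : 0 < S + (dp : ℝ) := by linarith
  set q : ℝ := (2 : ℝ) ^ (S + (dp : ℝ)) with hq_def
  have hq1 : 1 < q := by
    rw [hq_def]
    exact Real.one_lt_rpow_iff_of_pos (by norm_num) |>.mpr (Or.inl ⟨by norm_num, hSd⟩)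
  have hq0 : 0 < q - 1 := by linarith
  set V : ℝ := (volume (Metric.ball (0 : EuclideanSpace ℝ (Fin dp)) 1)).toReal with hV_def
  have hV0 : 0 ≤ V := ENNReal.toReal_nonneg
  set a : ℝ := (2 : ℝ) ^ (|S| + (dp : ℝ)) * V with ha_def
  have ha0 : 0 ≤ a := mul_nonneg (Real.rpow_nonneg (by norm_num) _) hV0
  refine ⟨a * q / (q - 1) + 1, by positivity, ?_⟩
  intro R hR
  have hR0 : (0 : ℝ) < R := lt_of_lt_of_le one_pos hR
  set p0 : EuclideanSpace ℝ (Fin dp) → ℝ := fun p => Real.sqrt (1 + ‖p‖ ^ 2) with hp0_def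
  set Kn : ℕ := ⌊Real.logb 2 R⌋₊ with hKn_def
  -- shells intersected with the set
  set T : ℕ → Set (EuclideanSpace ℝ (Fin dp)) :=
    fun k => {p | (2 : ℝ) ^ (k : ℝ) ≤ p0 p ∧ p0 p < 2 ^ ((k : ℝ) + 1)} ∩ {p | p0 p ≤ R}
    with hT_def
  have cover : {p : EuclideanSpace ℝ (Fin dp) | p0 p ≤ R} ⊆ ⋃ k : ℕ, T k := by
    intro p hp
    have h1 : (1 : ℝ) ≤ p0 p := p0_one_le p
    have h0 : (0 : ℝ) < p0 p := p0_pos p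
    refine Set.mem_iUnion.2 ⟨⌊Real.logb 2 (p0 p)⌋₊, ⟨⟨?_, ?_⟩, hp⟩⟩
    · calc (2 : ℝ) ^ ((⌊Real.logb 2 (p0 p)⌋₊ : ℝ))
          ≤ (2 : ℝ) ^ (Real.logb 2 (p0 p)) :=
            Real.rpow_le_rpow_of_exponent_le one_le_two
              (Nat.floor_le (Real.logb_nonneg one_lt_two h1))
        _ = p0 p := Real.rpow_logb two_pos (by norm_num) h0
    · calc p0 p = (2 : ℝ) ^ (Real.logb 2 (p0 p)) :=
            (Real.rpow_logb two_pos (by norm_num) h0).symm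
        _ < (2 : ℝ) ^ ((⌊Real.logb 2 (p0 p)⌋₊ : ℝ) + 1) :=
            Real.rpow_lt_rpow_of_exponent_lt one_lt_two (Nat.lt_floor_add_one _)
  have hRlt : R < (2 : ℝ) ^ ((Kn : ℝ) + 1) := by
    calc R = (2 : ℝ) ^ (Real.logb 2 R) := (Real.rpow_logb two_pos (by norm_num) hR0).symm
      _ < (2 : ℝ) ^ ((Kn : ℝ) + 1) :=
        Real.rpow_lt_rpow_of_exponent_lt one_lt_two (Nat.lt_floor_add_one _)
  have hempty : ∀ k : ℕ, Kn < k → T k = ∅ := by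
    intro k hk
    ext p
    simp only [hT_def, Set.mem_inter_iff, Set.mem_setOf_eq, Set.mem_empty_iff_false, iff_false]
    rintro ⟨⟨h1, -⟩, h2⟩
    have : (2 : ℝ) ^ ((Kn : ℝ) + 1) ≤ (2 : ℝ) ^ (k : ℝ) := by
      apply Real.rpow_le_rpow_of_exponent_le one_le_two
      have : (Kn : ℝ) + 1 ≤ (k : ℝ) := by exact_mod_cast hk
      linarith
    linarith
  -- integral over a single shell
  have Ik : ∀ k : ℕ, ∫⁻ p in T k, ENNReal.ofReal (p0 p ^ S) ≤ ENNReal.ofReal (a * q ^ k) := by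
    intro k
    have h2k : (0 : ℝ) < (2 : ℝ) ^ (k : ℝ) := Real.rpow_pos_of_pos two_pos _
    have h2k1 : (0 : ℝ) ≤ (2 : ℝ) ^ ((k : ℝ) + 1) := (Real.rpow_pos_of_pos two_pos _).le
    -- pointwise bound on the shell
    have hpt : ∀ p ∈ T k,
        ENNReal.ofReal (p0 p ^ S)
          ≤ ENNReal.ofReal ((2 : ℝ) ^ |S| * ((2 : ℝ) ^ (k : ℝ)) ^ S) := by
      rintro p ⟨⟨hlo, hhi⟩, -⟩
      apply ENNReal.ofReal_le_ofReal
      rcases le_or_gt 0 S with hS0 | hS0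
      · have e1 : ((2:ℝ) ^ ((k:ℝ)+1)) ^ S = (2:ℝ) ^ S * ((2:ℝ) ^ (k:ℝ)) ^ S := by
          rw [← Real.rpow_mul (by norm_num : (0:ℝ) ≤ 2), ← Real.rpow_mul (by norm_num : (0:ℝ) ≤ 2),
            ← Real.rpow_add two_pos]
          ring_nf
        have e2 : (2:ℝ) ^ S ≤ (2:ℝ) ^ |S| :=
          Real.rpow_le_rpow_of_exponent_le one_le_two (le_abs_self S)
        calc p0 p ^ S ≤ ((2 : ℝ) ^ ((k : ℝ) + 1)) ^ S :=
              Real.rpow_le_rpow (p0_pos p).le hhi.le hS0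
          _ = (2:ℝ) ^ S * ((2:ℝ) ^ (k:ℝ)) ^ S := e1
          _ ≤ (2 : ℝ) ^ |S| * ((2 : ℝ) ^ (k : ℝ)) ^ S := by
              nlinarith [Real.rpow_nonneg h2k.le S]
      · calc p0 p ^ S ≤ ((2 : ℝ) ^ (k : ℝ)) ^ S :=
              Real.rpow_le_rpow_of_nonpos h2k hlo hS0.le
          _ ≤ (2 : ℝ) ^ |S| * ((2 : ℝ) ^ (k : ℝ)) ^ S := by
              have h1 : (1 : ℝ) ≤ (2 : ℝ) ^ |S| := Real.one_le_rpow one_le_two (abs_nonneg S)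
              nlinarith [Real.rpow_nonneg h2k.le S]
    have hsub : T k ⊆ Metric.closedBall 0 ((2 : ℝ) ^ ((k : ℝ) + 1)) := by
      rintro p ⟨⟨-, hhi⟩, -⟩
      rw [Metric.mem_closedBall, dist_zero_right]
      exact (norm_le_p0 p).trans hhi.le
    calc ∫⁻ p in T k, ENNReal.ofReal (p0 p ^ S)
        ≤ ∫⁻ _ in T k, ENNReal.ofReal ((2 : ℝ) ^ |S| * ((2 : ℝ) ^ (k : ℝ)) ^ S) :=
          setLIntegral_mono measurable_const hpt
      _ = ENNReal.ofReal ((2 : ℝ) ^ |S| * ((2 : ℝ) ^ (k : ℝ)) ^ S) * volume (T k) :=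
          setLIntegral_const _ _
      _ ≤ ENNReal.ofReal ((2 : ℝ) ^ |S| * ((2 : ℝ) ^ (k : ℝ)) ^ S) *
            volume (Metric.closedBall (0 : EuclideanSpace ℝ (Fin dp)) ((2 : ℝ) ^ ((k : ℝ) + 1))) :=
          mul_le_mul_right (measure_mono hsub) _
      _ = ENNReal.ofReal (a * q ^ k) := by
          rw [Measure.addHaar_closedBall _ _ h2k1, ← ENNReal.ofReal_toReal
            (measure_ball_lt_top (x := (0 : EuclideanSpace ℝ (Fin dp))) (r := 1)).ne,
            ← ENNReal.ofReal_mul (by positivity), ← ENNReal.ofReal_mul (by positivity)]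
          congr 1
          rw [finrank_euclideanSpace_fin, ← hV_def]
          rw [← Real.rpow_natCast ((2:ℝ) ^ ((k:ℝ)+1)) dp, ← Real.rpow_mul (by norm_num),
            ← Real.rpow_mul (by norm_num), ha_def, hq_def,
            ← Real.rpow_natCast ((2:ℝ) ^ (S + (dp:ℝ))) k, ← Real.rpow_mul (by norm_num)]
          rw [show (2:ℝ) ^ (|S| + (dp:ℝ)) * V * (2:ℝ) ^ ((S + (dp:ℝ)) * (k:ℝ))
              = ((2:ℝ) ^ (|S| + (dp:ℝ)) * (2:ℝ) ^ ((S + (dp:ℝ)) * (k:ℝ))) * V from by ring,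
            show (2:ℝ) ^ |S| * (2:ℝ) ^ ((k:ℝ) * S) * ((2:ℝ) ^ (((k:ℝ) + 1) * (dp:ℝ)) * V)
              = ((2:ℝ) ^ |S| * (2:ℝ) ^ ((k:ℝ) * S) * (2:ℝ) ^ (((k:ℝ) + 1) * (dp:ℝ))) * V
              from by ring,
            ← Real.rpow_add two_pos, ← Real.rpow_add two_pos, ← Real.rpow_add two_pos,
            show |S| + (k:ℝ) * S + ((k:ℝ) + 1) * (dp:ℝ)
              = |S| + (dp:ℝ) + (S + (dp:ℝ)) * (k:ℝ) from by ring]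
    -- geometric sum bound
  have hgeom : ∑ k ∈ Finset.range (Kn + 1), (a * q ^ k)
      ≤ (a * q / (q - 1) + 1) * R ^ (S + (dp : ℝ)) := by
    have hqKn : q ^ Kn ≤ R ^ (S + (dp : ℝ)) := by
      have h2Kn : (2 : ℝ) ^ (Kn : ℝ) ≤ R := by
        calc (2 : ℝ) ^ (Kn : ℝ) ≤ (2 : ℝ) ^ (Real.logb 2 R) :=
            Real.rpow_le_rpow_of_exponent_le one_le_two
              (Nat.floor_le (Real.logb_nonneg one_lt_two hR))
          _ = R := Real.rpow_logb two_pos (by norm_num) hR0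
      calc q ^ Kn = ((2 : ℝ) ^ (Kn : ℝ)) ^ (S + (dp : ℝ)) := by
            rw [hq_def, ← Real.rpow_natCast ((2:ℝ) ^ (S + (dp:ℝ))) Kn,
              ← Real.rpow_mul (by norm_num), ← Real.rpow_mul (by norm_num), mul_comm]
        _ ≤ R ^ (S + (dp : ℝ)) :=
            Real.rpow_le_rpow (Real.rpow_pos_of_pos two_pos _).le h2Kn hSd.le
    have hsum : ∑ k ∈ Finset.range (Kn + 1), (a * q ^ k)
        = a * ((q ^ (Kn + 1) - 1) / (q - 1)) := by
      rw [← Finset.mul_sum, geom_sum_eq (by linarith : q ≠ 1)]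
    rw [hsum]
    have hqpow : (0 : ℝ) < q ^ Kn := pow_pos (by linarith) _
    have hRpow : (0 : ℝ) ≤ R ^ (S + (dp : ℝ)) := Real.rpow_nonneg hR0.le _
    have key : a * ((q ^ (Kn + 1) - 1) / (q - 1)) ≤ (a * q / (q - 1)) * R ^ (S + (dp : ℝ)) := by
      rw [mul_div_assoc' a, div_mul_eq_mul_div, div_le_div_iff_of_pos_right hq0]
      have : q ^ (Kn + 1) = q * q ^ Kn := by ring
      nlinarith [mul_le_mul_of_nonneg_left hqKn (mul_nonneg ha0 (by linarith : (0:ℝ) ≤ q))]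
    nlinarith
  calc ∫⁻ p in {p : EuclideanSpace ℝ (Fin dp) | p0 p ≤ R}, ENNReal.ofReal (p0 p ^ S)
      ≤ ∫⁻ p in ⋃ k : ℕ, T k, ENNReal.ofReal (p0 p ^ S) := lintegral_mono_set cover
    _ ≤ ∑' k : ℕ, ∫⁻ p in T k, ENNReal.ofReal (p0 p ^ S) := lintegral_iUnion_le _ _
    _ = ∑ k ∈ Finset.range (Kn + 1), ∫⁻ p in T k, ENNReal.ofReal (p0 p ^ S) := by
        refine tsum_eq_sum ?_
        intro k hk
        simp only [Finset.mem_range, not_lt] at hk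
        rw [hempty k (Nat.lt_of_succ_le hk), Measure.restrict_empty, lintegral_zero_measure]
    _ ≤ ∑ k ∈ Finset.range (Kn + 1), ENNReal.ofReal (a * q ^ k) :=
        Finset.sum_le_sum (fun k _ => Ik k)
    _ = ENNReal.ofReal (∑ k ∈ Finset.range (Kn + 1), (a * q ^ k)) :=
        (ENNReal.ofReal_sum_of_nonneg (fun k _ => by positivity)).symm
    _ ≤ ENNReal.ofReal ((a * q / (q - 1) + 1) * R ^ (S + (dp : ℝ))) :=
        ENNReal.ofReal_le_ofReal hgeom

end Aux

section Aux2

variable {dp : ℕ}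

/-- Pointwise (in `x`) interpolation estimate. -/
private lemma pointwise_bound (hdp : 1 ≤ dp) (C₀ M S : ℝ) (hC₀ : 0 < C₀) (hSM : S ≤ M)
    (hS : -(dp : ℝ) < S) :
    ∃ C : ℝ, 0 < C ∧ ∀ h : EuclideanSpace ℝ (Fin dp) → ℝ, Measurable h →
      (∀ p, 0 ≤ h p) → (∀ᵐ p : EuclideanSpace ℝ (Fin dp), h p ≤ C₀) →
      (∫⁻ p : EuclideanSpace ℝ (Fin dp), ENNReal.ofReal (Real.sqrt (1 + ‖p‖ ^ 2) ^ S * h p))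
        ≤ ENNReal.ofReal C *
          (∫⁻ p : EuclideanSpace ℝ (Fin dp), ENNReal.ofReal (Real.sqrt (1 + ‖p‖ ^ 2) ^ M * h p))
            ^ ((S + (dp : ℝ)) / (M + (dp : ℝ))) := by
  obtain ⟨K, hK, hKb⟩ := ball_bound hdp S hS
  have hSd : 0 < S + (dp : ℝ) := by linarith
  have hMd : 0 < M + (dp : ℝ) := by linarith
  set θ : ℝ := (S + (dp : ℝ)) / (M + (dp : ℝ)) with hθ_def
  have hθ0 : 0 < θ := div_pos hSd hMd
  refine ⟨C₀ * K + 1, by positivity, ?_⟩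
  intro h hmeas hpos haeb
  set p0 : EuclideanSpace ℝ (Fin dp) → ℝ := fun p => Real.sqrt (1 + ‖p‖ ^ 2) with hp0_def
  set B : ENNReal := ∫⁻ p, ENNReal.ofReal (p0 p ^ M * h p) with hB_def
  -- trivial monotone bound : integrand for S is ≤ integrand for M
  have hmono : ∀ p, ENNReal.ofReal (p0 p ^ S * h p) ≤ ENNReal.ofReal (p0 p ^ M * h p) := by
    intro p
    apply ENNReal.ofReal_le_ofReal
    exact mul_le_mul_of_nonneg_right
      (Real.rpow_le_rpow_of_exponent_le (p0_one_le p) hSM) (hpos p)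
  rcases eq_top_or_lt_top B with hBtop | hBfin
  · rw [hBtop, ENNReal.top_rpow_of_pos hθ0, ENNReal.mul_top (by simp [hC₀, hK]; positivity)]
    exact le_top
  rcases eq_or_ne B 0 with hB0 | hBne
  · have : (∫⁻ p, ENNReal.ofReal (p0 p ^ S * h p)) = 0 :=
      le_antisymm (le_trans (lintegral_mono hmono) (le_of_eq hB0)) (by positivity)
    simp only [hp0_def] at this
    simp [this]
  -- main case : 0 < B < ∞
  set b : ℝ := B.toReal with hb_def
  have hb0 : 0 < b := ENNReal.toReal_pos hBne hBfin.ne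
  have hBb : B = ENNReal.ofReal b := (ENNReal.ofReal_toReal hBfin.ne).symm
  set R : ℝ := b ^ (1 / (M + (dp : ℝ))) with hR_def
  have hR0 : 0 < R := Real.rpow_pos_of_pos hb0 _
  have hRSd : R ^ (S + (dp : ℝ)) = b ^ θ := by
    rw [hR_def, ← Real.rpow_mul hb0.le, hθ_def]
    congr 1
    field_simp
  have hRSM : R ^ (S - M) * b = b ^ θ := by
    rw [hR_def, ← Real.rpow_mul hb0.le]
    nth_rewrite 2 [show b = b ^ (1:ℝ) from (Real.rpow_one b).symm]
    rw [← Real.rpow_add hb0, hθ_def]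
    congr 1
    field_simp
    ring
  set s : Set (EuclideanSpace ℝ (Fin dp)) := {p | p0 p ≤ R} with hs_def
  have hs_meas : MeasurableSet s :=
    measurableSet_le (p0_continuous (dp := dp)).measurable measurable_const
  -- integral over s
  have hIs : ∫⁻ p in s, ENNReal.ofReal (p0 p ^ S * h p) ≤ ENNReal.ofReal (C₀ * K * b ^ θ) := by
    have step1 : ∫⁻ p in s, ENNReal.ofReal (p0 p ^ S * h p)
        ≤ ∫⁻ p in s, ENNReal.ofReal C₀ * ENNReal.ofReal (p0 p ^ S) := by
      apply setLIntegral_mono_ae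
        ((ENNReal.measurable_ofReal.comp (p0_rpow_measurable S)).const_mul _).aemeasurable
      filter_upwards [haeb] with p hp _
      show ENNReal.ofReal (p0 p ^ S * h p) ≤ ENNReal.ofReal C₀ * ENNReal.ofReal (p0 p ^ S)
      rw [← ENNReal.ofReal_mul hC₀.le]
      apply ENNReal.ofReal_le_ofReal
      rw [mul_comm C₀]
      exact mul_le_mul_of_nonneg_left hp (Real.rpow_nonneg (p0_pos p).le _)
    rw [lintegral_const_mul' _ _ ENNReal.ofReal_ne_top] at step1
    rcases le_or_gt 1 R with hR1 | hR1
    · calc ∫⁻ p in s, ENNReal.ofReal (p0 p ^ S * h p)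
          ≤ ENNReal.ofReal C₀ * ∫⁻ p in s, ENNReal.ofReal (p0 p ^ S) := step1
        _ ≤ ENNReal.ofReal C₀ * ENNReal.ofReal (K * R ^ (S + (dp : ℝ))) :=
            mul_le_mul_right (hKb R hR1) _
        _ = ENNReal.ofReal (C₀ * K * b ^ θ) := by
            rw [← ENNReal.ofReal_mul hC₀.le, hRSd]
            ring_nf
    · have hsempty : s = ∅ := by
        ext p
        simp only [hs_def, Set.mem_setOf_eq, Set.mem_empty_iff_false, iff_false, not_le]
        exact lt_of_lt_of_le hR1 (p0_one_le p)
      rw [hsempty, Measure.restrict_empty, lintegral_zero_measure]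
      positivity
  -- integral over sᶜ
  have hIsc : ∫⁻ p in sᶜ, ENNReal.ofReal (p0 p ^ S * h p) ≤ ENNReal.ofReal (b ^ θ) := by
    have step1 : ∫⁻ p in sᶜ, ENNReal.ofReal (p0 p ^ S * h p)
        ≤ ∫⁻ p in sᶜ, ENNReal.ofReal (R ^ (S - M)) * ENNReal.ofReal (p0 p ^ M * h p) := by
      apply setLIntegral_mono
      · apply Measurable.const_mul
        apply ENNReal.measurable_ofReal.comp
        exact (p0_rpow_measurable M).mul hmeas
      · intro p hp
        simp only [hs_def, Set.mem_compl_iff, Set.mem_setOf_eq, not_le] at hp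
        rw [← ENNReal.ofReal_mul (Real.rpow_nonneg hR0.le _)]
        apply ENNReal.ofReal_le_ofReal
        have e1 : p0 p ^ S = p0 p ^ (S - M) * p0 p ^ M := by
          rw [← Real.rpow_add (p0_pos p)]; ring_nf; rfl
        rw [e1, mul_assoc]
        apply mul_le_mul_of_nonneg_right _
          (mul_nonneg (Real.rpow_nonneg (p0_pos p).le _) (hpos p))
        exact Real.rpow_le_rpow_of_nonpos hR0 hp.le (by linarith)
    rw [lintegral_const_mul' _ _ ENNReal.ofReal_ne_top] at step1
    calc ∫⁻ p in sᶜ, ENNReal.ofReal (p0 p ^ S * h p)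
        ≤ ENNReal.ofReal (R ^ (S - M)) * ∫⁻ p in sᶜ, ENNReal.ofReal (p0 p ^ M * h p) := step1
      _ ≤ ENNReal.ofReal (R ^ (S - M)) * B := mul_le_mul_right (setLIntegral_le_lintegral _ _) _
      _ = ENNReal.ofReal (b ^ θ) := by
          rw [hBb, ← ENNReal.ofReal_mul (Real.rpow_nonneg hR0.le _), hRSM]
  -- combine
  calc (∫⁻ p, ENNReal.ofReal (p0 p ^ S * h p))
      = (∫⁻ p in s, ENNReal.ofReal (p0 p ^ S * h p))
        + ∫⁻ p in sᶜ, ENNReal.ofReal (p0 p ^ S * h p) := (lintegral_add_compl _ hs_meas).symm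
    _ ≤ ENNReal.ofReal (C₀ * K * b ^ θ) + ENNReal.ofReal (b ^ θ) := add_le_add hIs hIsc
    _ = ENNReal.ofReal ((C₀ * K + 1) * b ^ θ) := by
        rw [← ENNReal.ofReal_add (by positivity) (by positivity)]
        congr 1
        ring
    _ = ENNReal.ofReal (C₀ * K + 1) * B ^ θ := by
        rw [hBb, ENNReal.ofReal_rpow_of_pos hb0,
          ← ENNReal.ofReal_mul (by positivity)]

end Aux2

/-- **Interpolation inequality** (the special case `q = (M+d_p)/(S+d_p)`).
For `g : ℝ^{d_x} × ℝ^{d_p} → [0,∞)` measurable with `g ≤ C₀` a.e. and `M ≥ S > -d_p`,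
there is `C = C(C₀, S, M, d_p) > 0` with
`‖p₀^S g‖_{L^{(M+d_p)/(S+d_p)}_x L^1_p} ≤ C ‖p₀^M g‖_{L^1_x L^1_p}^{(S+d_p)/(M+d_p)}`,
where `p₀ = √(1+|p|²)`. -/
theorem interpolation_inequality
    (dx dp : ℕ) (hdx : 1 ≤ dx) (hdp : 1 ≤ dp)
    (C₀ M S : ℝ) (hC₀ : 0 < C₀) (hSM : S ≤ M) (hS : -(dp : ℝ) < S) :
    ∃ C : ℝ, 0 < C ∧
      ∀ (g : EuclideanSpace ℝ (Fin dx) → EuclideanSpace ℝ (Fin dp) → ℝ),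
        Measurable (Function.uncurry g) →
        (∀ x p, 0 ≤ g x p) →
        (∀ᵐ z : EuclideanSpace ℝ (Fin dx) × EuclideanSpace ℝ (Fin dp), g z.1 z.2 ≤ C₀) →
          (∫⁻ x : EuclideanSpace ℝ (Fin dx),
              (∫⁻ p : EuclideanSpace ℝ (Fin dp),
                ENNReal.ofReal (Real.sqrt (1 + ‖p‖ ^ 2) ^ S * g x p))
                  ^ ((M + (dp : ℝ)) / (S + (dp : ℝ)))) ^ ((S + (dp : ℝ)) / (M + (dp : ℝ)))
            ≤ ENNReal.ofReal C *
              (∫⁻ x : EuclideanSpace ℝ (Fin dx),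
                  ∫⁻ p : EuclideanSpace ℝ (Fin dp),
                    ENNReal.ofReal (Real.sqrt (1 + ‖p‖ ^ 2) ^ M * g x p))
                ^ ((S + (dp : ℝ)) / (M + (dp : ℝ))) := by
  obtain ⟨C, hC, hCb⟩ := pointwise_bound hdp C₀ M S hC₀ hSM hS
  have hSd : 0 < S + (dp : ℝ) := by linarith
  have hMd : 0 < M + (dp : ℝ) := by linarith
  set θ : ℝ := (S + (dp : ℝ)) / (M + (dp : ℝ)) with hθ_def
  set q : ℝ := (M + (dp : ℝ)) / (S + (dp : ℝ)) with hq_def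
  have hθ0 : 0 < θ := div_pos hSd hMd
  have hq0 : 0 < q := div_pos hMd hSd
  have hθq : θ * q = 1 := by
    rw [hθ_def, hq_def]
    field_simp
  refine ⟨C, hC, ?_⟩
  intro g hg hg0 hgC
  have hae : ∀ᵐ x : EuclideanSpace ℝ (Fin dx),
      ∀ᵐ p : EuclideanSpace ℝ (Fin dp), g x p ≤ C₀ := by
    rw [Measure.volume_eq_prod] at hgC
    exact Measure.ae_ae_of_ae_prod hgC
  have hpt : ∀ᵐ x : EuclideanSpace ℝ (Fin dx),
      (∫⁻ p : EuclideanSpace ℝ (Fin dp),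
        ENNReal.ofReal (Real.sqrt (1 + ‖p‖ ^ 2) ^ S * g x p)) ^ q
      ≤ ENNReal.ofReal C ^ q *
        ∫⁻ p : EuclideanSpace ℝ (Fin dp),
          ENNReal.ofReal (Real.sqrt (1 + ‖p‖ ^ 2) ^ M * g x p) := by
    filter_upwards [hae] with x hx
    have hx2 := hCb (g x) hg.of_uncurry_left (fun p => hg0 x p) hx
    calc (∫⁻ p, ENNReal.ofReal (Real.sqrt (1 + ‖p‖ ^ 2) ^ S * g x p)) ^ q
        ≤ (ENNReal.ofReal C *
            (∫⁻ p, ENNReal.ofReal (Real.sqrt (1 + ‖p‖ ^ 2) ^ M * g x p)) ^ θ) ^ q :=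
          ENNReal.rpow_le_rpow hx2 hq0.le
      _ = ENNReal.ofReal C ^ q *
            ∫⁻ p, ENNReal.ofReal (Real.sqrt (1 + ‖p‖ ^ 2) ^ M * g x p) := by
          rw [ENNReal.mul_rpow_of_nonneg _ _ hq0.le, ← ENNReal.rpow_mul, hθq,
            ENNReal.rpow_one]
  calc (∫⁻ x : EuclideanSpace ℝ (Fin dx),
        (∫⁻ p : EuclideanSpace ℝ (Fin dp),
          ENNReal.ofReal (Real.sqrt (1 + ‖p‖ ^ 2) ^ S * g x p)) ^ q) ^ θ
      ≤ (∫⁻ x : EuclideanSpace ℝ (Fin dx), ENNReal.ofReal C ^ q *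
          ∫⁻ p : EuclideanSpace ℝ (Fin dp),
            ENNReal.ofReal (Real.sqrt (1 + ‖p‖ ^ 2) ^ M * g x p)) ^ θ :=
        ENNReal.rpow_le_rpow (lintegral_mono_ae hpt) hθ0.le
    _ = (ENNReal.ofReal C ^ q * ∫⁻ x : EuclideanSpace ℝ (Fin dx),
          ∫⁻ p : EuclideanSpace ℝ (Fin dp),
            ENNReal.ofReal (Real.sqrt (1 + ‖p‖ ^ 2) ^ M * g x p)) ^ θ := by
        rw [lintegral_const_mul' _ _ (ENNReal.rpow_ne_top_of_nonneg hq0.le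
          ENNReal.ofReal_ne_top)]
    _ = ENNReal.ofReal C *
        (∫⁻ x : EuclideanSpace ℝ (Fin dx),
          ∫⁻ p : EuclideanSpace ℝ (Fin dp),
            ENNReal.ofReal (Real.sqrt (1 + ‖p‖ ^ 2) ^ M * g x p)) ^ θ := by
        rw [ENNReal.mul_rpow_of_nonneg _ _ hθ0.le, ← ENNReal.rpow_mul,
          show q * θ = 1 from by rw [mul_comm]; exact hθq, ENNReal.rpow_one]
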